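/- Assume L = 1 and write f_λ = η_λ − θ. Then there exists C > 0 such that for all sufficiently large λ: (i) λt − Ct/λ ≤ ρ_λ(t) ≤ λt for all t ∈ [0,1]; and (ii) (coth ρ_λ(t) − 1) · |f_λ(t)| ≤ C e^{−λt} for all t ∈ (0,1]. In particular λ − C/λ ≤ ρ_λ(1) ≤ λ, so the length of the path can be recovered as lim_{λ→∞} ρ_λ(1)/λ. -/

import Mathlib

open Real Set Filter Topology

/-- If `g` has a derivative at `t` and `g s ≤ g t` on `(a,t)`, then `0 ≤ g'`. -/
lemma my_deriv_nonneg_of_left_max {g : ℝ → ℝ} {g' t a : ℝ} (hg : HasDerivAt g g' t)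
    (hat : a < t) (hmax : ∀ s ∈ Ioo a t, g s ≤ g t) : 0 ≤ g' := by
  have hs : Tendsto (slope g t) (𝓝[≠] t) (𝓝 g') := hasDerivAt_iff_tendsto_slope.mp hg
  have hsub : Ioo a t ⊆ {t}ᶜ := fun s hs' => ne_of_lt hs'.2
  have hs' : Tendsto (slope g t) (𝓝[Ioo a t] t) (𝓝 g') :=
    hs.mono_left (nhdsWithin_mono _ hsub)
  have hne : (𝓝[Ioo a t] t).NeBot := right_nhdsWithin_Ioo_neBot hat
  refine ge_of_tendsto hs' ?_
  filter_upwards [self_mem_nhdsWithin] with s hs''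
  have h1 : g s - g t ≤ 0 := sub_nonpos.mpr (hmax s hs'')
  have h2 : s - t < 0 := sub_neg.mpr hs''.2
  have h3 : 0 ≤ (g s - g t) / (s - t) := div_nonneg_of_nonpos h1 h2.le
  rwa [slope_def_field]


/-- Barrier / invariance lemma on `[0,1]`. -/
lemma my_barrier {f g f' g' : ℝ → ℝ}
    (hfc : ContinuousOn f (Icc 0 1)) (hgc : ContinuousOn g (Icc 0 1))
    (hfd : ∀ t ∈ Ioc (0:ℝ) 1, HasDerivAt f (f' t) t)
    (hgd : ∀ t ∈ Ioc (0:ℝ) 1, HasDerivAt g (g' t) t)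
    (h0 : f 0 < g 0)
    (hcross : ∀ t ∈ Ioc (0:ℝ) 1, f t = g t → f' t < g' t) :
    ∀ t ∈ Icc (0:ℝ) 1, f t < g t := by
  by_contra hcon
  push_neg at hcon
  obtain ⟨t₀, ht₀, hge⟩ := hcon
  set dfun : ℝ → ℝ := fun s => f s - g s with hdfun
  have hdc : ContinuousOn dfun (Icc 0 1) := hfc.sub hgc
  set S : Set ℝ := Icc 0 1 ∩ dfun ⁻¹' (Ici 0) with hS
  have hScl : IsClosed S := hdc.preimage_isClosed_of_isClosed isClosed_Icc isClosed_Ici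
  have hSne : S.Nonempty := ⟨t₀, ht₀, sub_nonneg.mpr hge⟩
  have hSbdd : BddBelow S := ⟨0, fun s hs => hs.1.1⟩
  set c := sInf S with hc
  have hcS : c ∈ S := hScl.csInf_mem hSne hSbdd
  have hcIcc : c ∈ Icc (0:ℝ) 1 := hcS.1
  have hc0 : 0 < c := by
    rcases hcIcc.1.lt_or_eq with h | h
    · exact h
    · exfalso
      have h2 : (0:ℝ) ≤ dfun c := hcS.2
      rw [← h] at h2
      have h3 : dfun 0 < 0 := sub_neg.mpr h0
      linarith
  have hlt : ∀ s ∈ Ico (0:ℝ) c, dfun s < 0 := by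
    intro s hs
    by_contra hns
    push_neg at hns
    have hsS : s ∈ S := ⟨⟨hs.1, hs.2.le.trans hcIcc.2⟩, hns⟩
    exact absurd (csInf_le hSbdd hsS) (not_le.mpr hs.2)
  -- value at c is 0
  have hd0 : dfun c = 0 := by
    refine le_antisymm ?_ hcS.2
    have hcont : ContinuousWithinAt dfun (Ioo 0 c) c := by
      refine (hdc.continuousWithinAt hcIcc).mono ?_
      exact fun s hs => ⟨hs.1.le, hs.2.le.trans hcIcc.2⟩
    have hne : (𝓝[Ioo (0:ℝ) c] c).NeBot := right_nhdsWithin_Ioo_neBot hc0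
    refine le_of_tendsto hcont ?_
    filter_upwards [self_mem_nhdsWithin] with s hs
    exact (hlt s ⟨hs.1.le, hs.2⟩).le
  have hcIoc : c ∈ Ioc (0:ℝ) 1 := ⟨hc0, hcIcc.2⟩
  have hdd : HasDerivAt dfun (f' c - g' c) c := (hfd c hcIoc).sub (hgd c hcIoc)
  have hmax : ∀ s ∈ Ioo (0:ℝ) c, dfun s ≤ dfun c := by
    intro s hs
    rw [hd0]
    exact (hlt s ⟨hs.1.le, hs.2⟩).le
  have h1 : 0 ≤ f' c - g' c := my_deriv_nonneg_of_left_max hdd hc0 hmax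
  have h2 : f' c < g' c := hcross c hcIoc (sub_eq_zero.mp hd0)
  linarith

/-- Nonnegativity from nonnegative derivative on `(0,1]`, value `0` at `0`. -/
lemma my_nonneg_of_deriv {f f' : ℝ → ℝ}
    (hfc : ContinuousOn f (Icc 0 1))
    (hfd : ∀ t ∈ Ioc (0:ℝ) 1, HasDerivAt f (f' t) t)
    (h0 : f 0 = 0)
    (hpos : ∀ t ∈ Ioc (0:ℝ) 1, 0 ≤ f' t) :
    ∀ t ∈ Icc (0:ℝ) 1, 0 ≤ f t := by
  have hmono : MonotoneOn f (Icc 0 1) := by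
    refine monotoneOn_of_deriv_nonneg (convex_Icc 0 1) hfc ?_ ?_
    · intro x hx
      rw [interior_Icc] at hx
      exact ((hfd x ⟨hx.1, hx.2.le⟩).differentiableAt).differentiableWithinAt
    · intro x hx
      rw [interior_Icc] at hx
      rw [(hfd x ⟨hx.1, hx.2.le⟩).deriv]
      exact hpos x ⟨hx.1, hx.2.le⟩
  intro t ht
  have := hmono (left_mem_Icc.mpr zero_le_one) ht ht.1
  rwa [h0] at this

lemma my_coth_ge_one {r : ℝ} (hr : 0 < r) : 1 ≤ Real.cosh r / Real.sinh r := by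
  have h1 : 0 < Real.sinh r := Real.sinh_pos_iff.mpr hr
  rw [le_div_iff₀ h1, one_mul]
  exact (Real.sinh_lt_cosh r).le

lemma my_coth_sub_one_le {r : ℝ} (hr : 0 < r) :
    Real.cosh r / Real.sinh r - 1 ≤ 1 / r := by
  have h1 : 0 < Real.sinh r := Real.sinh_pos_iff.mpr hr
  have h2 : Real.cosh r / Real.sinh r - 1 = Real.exp (-r) / Real.sinh r := by
    rw [div_sub_one h1.ne', Real.cosh_sub_sinh]
  rw [h2, div_le_div_iff₀ h1 hr]
  -- r * exp (-r) ≤ sinh r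
  rw [Real.sinh_eq]
  have h3 : 1 + 2*r ≤ Real.exp (2*r) := by
    have := Real.add_one_le_exp (2*r)
    linarith
  have h4 : Real.exp (-r) * Real.exp r = 1 := by
    rw [← Real.exp_add]; simp
  have h5 : Real.exp (-r) * Real.exp (-r) * Real.exp (2*r) = 1 := by
    rw [← Real.exp_add, ← Real.exp_add]; ring_nf; simp
  nlinarith [Real.exp_pos (-r), Real.exp_pos r, Real.exp_pos (2*r)]

lemma my_one_div_le_coth {r : ℝ} (hr : 0 < r) :
    1 / r ≤ Real.cosh r / Real.sinh r := by
  have h1 : 0 < Real.sinh r := Real.sinh_pos_iff.mpr hr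
  rw [div_le_div_iff₀ hr h1]
  -- sinh r ≤ r cosh r
  have key : ∀ x ∈ Icc (0:ℝ) r, Real.sinh x ≤ x * Real.cosh x := by
    have hmono : MonotoneOn (fun x => x * Real.cosh x - Real.sinh x) (Icc 0 r) := by
      refine monotoneOn_of_deriv_nonneg (convex_Icc 0 r) (by fun_prop) ?_ ?_
      · intro x hx
        exact (((hasDerivAt_id x).mul (Real.hasDerivAt_cosh x)).sub
          (Real.hasDerivAt_sinh x)).differentiableAt.differentiableWithinAt
      · intro x hx
        rw [interior_Icc] at hx
        have hder : HasDerivAt (fun x => x * Real.cosh x - Real.sinh x)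
            (1 * Real.cosh x + x * Real.sinh x - Real.cosh x) x :=
          ((hasDerivAt_id x).mul (Real.hasDerivAt_cosh x)).sub (Real.hasDerivAt_sinh x)
        rw [hder.deriv]
        have : 0 ≤ x * Real.sinh x := mul_nonneg hx.1.le (Real.sinh_pos_iff.mpr hx.1).le
        linarith
    intro x hx
    have h5 := hmono (left_mem_Icc.mpr hr.le) hx hx.1
    simp at h5
    linarith
  have := key r (right_mem_Icc.mpr hr.le)
  linarith

set_option maxHeartbeats 1000000 in
lemma my_step {d : ℕ}
    (θ θ' : ℝ → EuclideanSpace ℝ (Fin d))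
    (hθ1 : ∀ t ∈ Icc (0 : ℝ) 1, ‖θ t‖ = 1)
    (hθd : ∀ t ∈ Icc (0 : ℝ) 1, HasDerivAt θ (θ' t) t)
    (η : ℝ → EuclideanSpace ℝ (Fin d)) (ρ : ℝ → ℝ)
    (hηc : ContinuousOn η (Icc 0 1))
    (hρc : ContinuousOn ρ (Icc 0 1))
    (hη1 : ∀ t ∈ Icc (0 : ℝ) 1, ‖η t‖ = 1)
    (hη0 : η 0 = θ 0)
    (hρ0 : ρ 0 = 0)
    (hρpos : ∀ t ∈ Ioc (0 : ℝ) 1, 0 < ρ t)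
    (lam M : ℝ)
    (hODE : ∀ t ∈ Ioc (0 : ℝ) 1,
      HasDerivAt η ((lam * (Real.cosh (ρ t) / Real.sinh (ρ t))) •
          (θ t - (inner ℝ (θ t) (η t) : ℝ) • η t)) t ∧
      HasDerivAt ρ (lam * (inner ℝ (θ t) (η t) : ℝ)) t)
    (hM1 : 1 ≤ M) (hM : ∀ t ∈ Icc (0:ℝ) 1, ‖θ' t‖ ≤ M) (hlam : 2*M ≤ lam) :
    (∀ t ∈ Icc (0 : ℝ) 1, lam * t - (2*M^2) * t / lam ≤ ρ t ∧ ρ t ≤ lam * t) ∧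
    (∀ t ∈ Ioc (0 : ℝ) 1,
      (Real.cosh (ρ t) / Real.sinh (ρ t) - 1) * ‖η t - θ t‖ ≤ 6 * Real.exp (-(lam * t))) := by
  have hM0 : (0:ℝ) < M := lt_of_lt_of_le one_pos hM1
  have hlam0 : (0:ℝ) < lam := lt_of_lt_of_le (by linarith) hlam
  set f : ℝ → EuclideanSpace ℝ (Fin d) := fun t => η t - θ t with hfdef
  set w : ℝ → ℝ := fun t => (inner ℝ (f t) (f t) : ℝ) with hwdef
  set h : ℝ → ℝ := fun t => (inner ℝ (θ t) (η t) : ℝ) with hhdef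
  set c : ℝ → ℝ := fun t => Real.cosh (ρ t) / Real.sinh (ρ t) with hcdef
  set W' : ℝ → ℝ :=
    fun t => 2 * ((lam * c t) * ((h t)^2 - 1)) - 2 * (inner ℝ (θ' t) (f t) : ℝ) with hW'def
  have hθc : ContinuousOn θ (Icc 0 1) := fun t ht => (hθd t ht).continuousAt.continuousWithinAt
  have hfc : ContinuousOn f (Icc 0 1) := hηc.sub hθc
  have hwc : ContinuousOn w (Icc 0 1) := hfc.inner hfc
  have hwnorm : ∀ t, w t = ‖f t‖^2 := fun t => real_inner_self_eq_norm_sq _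
  have hw0 : w 0 = 0 := by simp [hwdef, hfdef, hη0]
  have hw2h : ∀ t ∈ Icc (0:ℝ) 1, w t = 2 - 2 * h t := by
    intro t ht
    have e1 : (inner ℝ (η t) (η t) : ℝ) = 1 := by
      rw [real_inner_self_eq_norm_sq, hη1 t ht]; norm_num
    have e2 : (inner ℝ (θ t) (θ t) : ℝ) = 1 := by
      rw [real_inner_self_eq_norm_sq, hθ1 t ht]; norm_num
    have e3 : (inner ℝ (η t) (θ t) : ℝ) = h t := real_inner_comm _ _
    simp only [hwdef, hfdef, inner_sub_left, inner_sub_right, e1, e2, e3]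
    ring
  have hfb : ∀ t : ℝ, ∀ b : ℝ, 0 ≤ b → w t ≤ b^2 → ‖f t‖ ≤ b := by
    intro t b hb hwb
    rw [hwnorm t] at hwb
    nlinarith [norm_nonneg (f t)]
  have hh_abs : ∀ t ∈ Icc (0:ℝ) 1, |h t| ≤ 1 := by
    intro t ht
    have h1 := abs_real_inner_le_norm (θ t) (η t)
    rw [hθ1 t ht, hη1 t ht] at h1
    simpa using h1
  have hh_le : ∀ t ∈ Icc (0:ℝ) 1, h t ≤ 1 := fun t ht => (abs_le.mp (hh_abs t ht)).2
  have hw_nn : ∀ t : ℝ, 0 ≤ w t := fun t => by rw [hwnorm t]; positivity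
  have hρd : ∀ t ∈ Ioc (0:ℝ) 1, HasDerivAt ρ (lam * h t) t := fun t ht => (hODE t ht).2
  have hip : ∀ t ∈ Icc (0:ℝ) 1, |(inner ℝ (θ' t) (f t) : ℝ)| ≤ M * ‖f t‖ := by
    intro t ht
    refine (abs_real_inner_le_norm _ _).trans ?_
    exact mul_le_mul_of_nonneg_right (hM t ht) (norm_nonneg _)
  -- derivative of w
  have hwd : ∀ t ∈ Ioc (0:ℝ) 1, HasDerivAt w (W' t) t := by
    intro t ht
    have htI : t ∈ Icc (0:ℝ) 1 := Ioc_subset_Icc_self ht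
    have hfd : HasDerivAt f ((lam * c t) • (θ t - h t • η t) - θ' t) t :=
      ((hODE t ht).1).sub (hθd t htI)
    have hD := HasDerivAt.inner ℝ hfd hfd
    have e1 : (inner ℝ (η t) (η t) : ℝ) = 1 := by
      rw [real_inner_self_eq_norm_sq, hη1 t htI]; norm_num
    have e2 : (inner ℝ (θ t) (θ t) : ℝ) = 1 := by
      rw [real_inner_self_eq_norm_sq, hθ1 t htI]; norm_num
    have e3 : (inner ℝ (η t) (θ t) : ℝ) = (inner ℝ (θ t) (η t) : ℝ) := real_inner_comm _ _
    have hXf : (inner ℝ ((lam * c t) • (θ t - h t • η t)) (f t) : ℝ)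
        = (lam * c t) * ((h t)^2 - 1) := by
      simp only [hhdef, hfdef, real_inner_smul_left, inner_sub_left, inner_sub_right,
        real_inner_smul_left, e1, e2, e3]
      ring
    have hcomm : (inner ℝ (f t) ((lam * c t) • (θ t - h t • η t) - θ' t) : ℝ)
        = (inner ℝ ((lam * c t) • (θ t - h t • η t) - θ' t) (f t) : ℝ) := real_inner_comm _ _
    refine hD.congr_deriv ?_
    simp only [hW'def]
    rw [hcomm, inner_sub_left, hXf]
    ring
  -- Barrier 1 : w < (2M/lam)^2 on [0,1]
  have hble : 2*M/lam ≤ 1 := by rw [div_le_one hlam0]; linarith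
  have hb1 : ∀ t ∈ Icc (0:ℝ) 1, w t < (2*M/lam)^2 := by
    refine my_barrier (g := fun _ => (2*M/lam)^2) (g' := fun _ => (0:ℝ))
      hwc continuousOn_const hwd (fun t _ => hasDerivAt_const t _) ?_ ?_
    · rw [hw0]; positivity
    · intro t ht hcw
      have htI : t ∈ Icc (0:ℝ) 1 := Ioc_subset_Icc_self ht
      have hct : 1 ≤ c t := my_coth_ge_one (hρpos t ht)
      have hht : h t = 1 - w t / 2 := by rw [hw2h t htI]; ring
      have hb0 : (0:ℝ) < 2*M/lam := by positivity
      have hfn : ‖f t‖ = 2*M/lam := by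
        have h1 : ‖f t‖^2 = (2*M/lam)^2 := by rw [← hwnorm t, hcw]
        have h2 : ‖f t‖ = Real.sqrt ((2*M/lam)^2) := by
          rw [← h1, Real.sqrt_sq (norm_nonneg _)]
        rw [h2, Real.sqrt_sq hb0.le]
      have hipt := hip t htI
      have habs : (inner ℝ (θ' t) (f t) : ℝ) ≥ -(M * ‖f t‖) := by
        have := abs_le.mp hipt; linarith [this.1]
      have hwt1 : w t ≤ 1 := by rw [hcw]; nlinarith [hble, hb0]
      have hsq : (h t)^2 - 1 ≤ -(3/4) * w t := by
        rw [hht]; nlinarith [hwt1, hw_nn t]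
      have hneg : (h t)^2 - 1 ≤ 0 := by nlinarith [abs_le.mp (hh_abs t htI)]
      have hmul : 2*((lam * c t) * ((h t)^2 - 1)) ≤ 2*(lam * ((h t)^2 - 1)) := by
        have hd : (c t - 1) * ((h t)^2 - 1) ≤ 0 :=
          mul_nonpos_of_nonneg_of_nonpos (sub_nonneg.mpr hct) hneg
        have h7 : lam * ((c t - 1) * ((h t)^2 - 1)) ≤ 0 :=
          mul_nonpos_of_nonneg_of_nonpos hlam0.le hd
        nlinarith [h7]
      simp only [hW'def]
      have hfin : lam * ((h t)^2 - 1) ≤ lam * (-(3/4) * w t) :=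
        mul_le_mul_of_nonneg_left hsq hlam0.le
      rw [hfn] at habs
      have hc3 : lam * (-(3/4) * w t) = -(3/2)*(M*(2*M/lam)) := by
        rw [hcw]; field_simp; ring
      have hc4 : (0:ℝ) < M*(2*M/lam) := by positivity
      linarith [hmul, hfin, habs, hc3, hc4]
  have hwle : ∀ t ∈ Icc (0:ℝ) 1, w t ≤ (2*M/lam)^2 := fun t ht => (hb1 t ht).le
  -- (i) upper bound : ρ t ≤ lam * t
  have hup : ∀ t ∈ Icc (0:ℝ) 1, ρ t ≤ lam * t := by
    have hcont1 : ContinuousOn (fun t : ℝ => lam * t - ρ t) (Icc 0 1) :=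
      (continuousOn_const.mul continuousOn_id).sub hρc
    have := my_nonneg_of_deriv (f := fun t => lam * t - ρ t)
      (f' := fun t => lam - lam * h t) hcont1
      (fun t ht => by
        have hlin : HasDerivAt (fun s : ℝ => lam * s) lam t := by
          simpa using (hasDerivAt_id t).const_mul lam
        exact hlin.sub (hρd t ht))
      (by simp [hρ0])
      (fun t ht => by
        have h9 := mul_nonneg hlam0.le (sub_nonneg.mpr (hh_le t (Ioc_subset_Icc_self ht)))
        show (0:ℝ) ≤ lam - lam * h t
        nlinarith [h9])
    intro t ht
    have h10 : 0 ≤ lam * t - ρ t := this t ht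
    linarith
  -- (i) lower bound
  have hlow : ∀ t ∈ Icc (0:ℝ) 1, lam * t - (2*M^2) * t / lam ≤ ρ t := by
    have hcont2 : ContinuousOn (fun t : ℝ => ρ t - lam * t + (2*M^2/lam) * t) (Icc 0 1) :=
      (hρc.sub (continuousOn_const.mul continuousOn_id)).add
        (continuousOn_const.mul continuousOn_id)
    have := my_nonneg_of_deriv (f := fun t => ρ t - lam * t + (2*M^2/lam) * t)
      (f' := fun t => lam * h t - lam + 2*M^2/lam) hcont2
      (fun t ht => by
        have hlin : HasDerivAt (fun s : ℝ => lam * s) lam t := by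
          simpa using (hasDerivAt_id t).const_mul lam
        have hlin2 : HasDerivAt (fun s : ℝ => (2*M^2/lam) * s) (2*M^2/lam) t := by
          simpa using (hasDerivAt_id t).const_mul (2*M^2/lam)
        exact ((hρd t ht).sub hlin).add hlin2)
      (by simp [hρ0])
      (fun t ht => by
        have htI : t ∈ Icc (0:ℝ) 1 := Ioc_subset_Icc_self ht
        have h1 := hwle t htI
        have h2 := hw2h t htI
        have h3 : lam * (1 - h t) ≤ lam * ((2*M/lam)^2 / 2) := by
          apply mul_le_mul_of_nonneg_left _ hlam0.le
          nlinarith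
        have h4 : lam * ((2*M/lam)^2/2) = 2*M^2/lam := by field_simp
        nlinarith)
    intro t ht
    have h5 : (2*M^2) * t / lam = (2*M^2/lam) * t := by ring
    have := this t ht
    linarith
  -- Barrier 2 : small-time bound  ‖f t‖ ≤ 2 M t
  have hb2 : ∀ t ∈ Icc (0:ℝ) 1, ‖f t‖ ≤ 2*M*t := by
    have hball : ∀ ε > (0:ℝ), ∀ t ∈ Icc (0:ℝ) 1, w t < (2*M*t + ε)^2 := by
      intro ε hε
      refine my_barrier hwc (by fun_prop) hwd
        (g' := fun t => 2 * (2*M*t + ε) * (2*M))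
        (fun t _ => by
          have : HasDerivAt (fun s : ℝ => 2*M*s + ε) (2*M) t := by
            simpa using ((hasDerivAt_id t).const_mul (2*M)).add_const ε
          simpa using this.fun_pow 2) ?_ ?_
      · rw [hw0]; positivity
      · intro t ht hcw
        have htI : t ∈ Icc (0:ℝ) 1 := Ioc_subset_Icc_self ht
        have hρt := hρpos t ht
        have hρu := hup t htI
        have hct : 1/(lam * t) ≤ c t := by
          refine le_trans ?_ (my_one_div_le_coth hρt)
          apply one_div_le_one_div_of_le hρt hρu
        have hctpos : 0 < 1/(lam*t) := by
          have := ht.1; positivity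
        have hht : h t = 1 - w t / 2 := by rw [hw2h t htI]; ring
        have hb0' : (0:ℝ) < 2*M/lam := by positivity
        have hwt1 : w t ≤ 1 := by
          have hbb := mul_nonneg hb0'.le (sub_nonneg.mpr hble)
          nlinarith [hwle t htI, hbb]
        have hεM : 0 < 2*M*t + ε := by
          have ht0 := ht.1
          positivity
        have hfn : ‖f t‖ = 2*M*t + ε := by
          have h1 : ‖f t‖^2 = (2*M*t + ε)^2 := by rw [← hwnorm t, hcw]
          have h2 : ‖f t‖ = Real.sqrt ((2*M*t + ε)^2) := by
            rw [← h1, Real.sqrt_sq (norm_nonneg _)]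
          rw [h2, Real.sqrt_sq hεM.le]
        have hipt := hip t htI
        have habs : (inner ℝ (θ' t) (f t) : ℝ) ≥ -(M * ‖f t‖) := by
          have := abs_le.mp hipt; linarith [this.1]
        have hsq : (h t)^2 - 1 ≤ -(3/4) * w t := by
          rw [hht]; nlinarith [hwt1, hw_nn t]
        have hneg : (h t)^2 - 1 ≤ 0 := by nlinarith [abs_le.mp (hh_abs t htI)]
        have hmul : (lam * c t) * ((h t)^2 - 1) ≤ (lam * (1/(lam*t))) * ((h t)^2 - 1) := by
          have hd : (c t - 1/(lam*t)) * ((h t)^2 - 1) ≤ 0 :=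
            mul_nonpos_of_nonneg_of_nonpos (sub_nonneg.mpr hct) hneg
          have h7 : lam * ((c t - 1/(lam*t)) * ((h t)^2 - 1)) ≤ 0 :=
            mul_nonpos_of_nonneg_of_nonpos hlam0.le hd
          nlinarith [h7]
        have hmul2 : (lam * (1/(lam*t))) * ((h t)^2 - 1) ≤ 0 := by
          have h5 : lam * (1/(lam*t)) = 1/t := by
            rw [one_div, mul_inv, one_div, ← mul_assoc, mul_inv_cancel₀ hlam0.ne', one_mul]
          rw [h5]
          have h6 : (0:ℝ) < 1/t := by
            have ht0 := ht.1
            positivity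
          exact mul_nonpos_of_nonneg_of_nonpos h6.le hneg
        simp only [hW'def]
        rw [hfn] at habs
        nlinarith [hmul, hmul2, habs, mul_pos hM0 hεM]
    intro t ht
    have : ∀ ε > (0:ℝ), ‖f t‖ ≤ 2*M*t + ε := by
      intro ε hε
      have h1 := (hball ε hε t ht).le
      apply hfb t _ _ h1
      have := ht.1; positivity
    exact le_of_forall_pos_le_add this
  -- part (ii)
  refine ⟨fun t ht => ⟨hlow t ht, hup t ht⟩, ?_⟩
  intro t ht
  have htI : t ∈ Icc (0:ℝ) 1 := Ioc_subset_Icc_self ht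
  have hρt := hρpos t ht
  have hρu := hup t htI
  have hρl : lam * t / 2 ≤ ρ t := by
    have h1 := hlow t htI
    have h2 : (2*M^2) * t / lam ≤ lam * t / 2 := by
      rw [div_le_div_iff₀ hlam0 (by norm_num : (0:ℝ) < 2)]
      have hsq2 : (2*M)*(2*M) ≤ lam*lam := mul_le_mul hlam hlam (by linarith) hlam0.le
      nlinarith [hsq2, ht.1.le]
    linarith
  have hfs : ‖f t‖ ≤ 2*M/lam := hfb t _ (by positivity) (hwle t htI)
  have hf2 : ‖f t‖ ≤ 2*M*t := hb2 t htI
  have hc1 : 0 ≤ c t - 1 := by linarith [my_coth_ge_one hρt]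
  rcases le_or_gt (lam * t) 1 with hcase | hcase
  · -- small time
    have h1 : c t - 1 ≤ 1 / ρ t := my_coth_sub_one_le hρt
    have hltpos : (0:ℝ) < lam * t := mul_pos hlam0 ht.1
    have h2 : 1 / ρ t ≤ 2 / (lam * t) := by
      rw [div_le_div_iff₀ hρt hltpos]
      linarith
    have h3 : (c t - 1) * ‖f t‖ ≤ (2/(lam*t)) * (2*M*t) := by
      apply mul_le_mul (h1.trans h2) hf2 (norm_nonneg _)
      exact div_nonneg (by norm_num) hltpos.le
    have h4 : (2/(lam*t)) * (2*M*t) = 4*M/lam := by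
      rw [div_mul_eq_mul_div, div_eq_div_iff hltpos.ne' hlam0.ne']
      ring
    have h5 : 4*M/lam ≤ 2 := by
      rw [div_le_iff₀ hlam0]; linarith
    have h6 : Real.exp (-(1:ℝ)) ≤ Real.exp (-(lam*t)) := by
      apply Real.exp_le_exp.mpr; linarith
    have h7 : (1:ℝ)/3 ≤ Real.exp (-(1:ℝ)) := by
      have h8 : Real.exp 1 ≤ 3 := by
        have := Real.exp_one_lt_d9; linarith
      have h9 : Real.exp (-(1:ℝ)) * Real.exp 1 = 1 := by
        rw [← Real.exp_add]; simp
      nlinarith [Real.exp_pos (-(1:ℝ)), Real.exp_pos 1]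
    nlinarith [h3, h4, h5, h6, h7]
  · -- large time
    have hr2 : (1:ℝ)/2 ≤ ρ t := by
      have : (1:ℝ)/2 ≤ lam * t / 2 := by linarith
      linarith
    have hexp : c t - 1 ≤ 4 * Real.exp (-(2 * ρ t)) := by
      have hsh : 0 < Real.sinh (ρ t) := Real.sinh_pos_iff.mpr hρt
      have heq : c t - 1 = Real.exp (-(ρ t)) / Real.sinh (ρ t) := by
        simp only [hcdef]
        rw [div_sub_one hsh.ne', Real.cosh_sub_sinh]
      have hEpos : (0:ℝ) < (Real.exp (ρ t) - Real.exp (-(ρ t)))/2 := by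
        have := Real.exp_lt_exp.mpr (show -(ρ t) < ρ t by linarith)
        linarith
      rw [heq, Real.sinh_eq, div_le_iff₀ hEpos]
      have e1 : Real.exp (-(2*ρ t)) * Real.exp (ρ t) = Real.exp (-(ρ t)) := by
        rw [← Real.exp_add]; ring_nf
      have e2 : Real.exp (-(2*ρ t)) * Real.exp (-(ρ t)) = Real.exp (-(3*ρ t)) := by
        rw [← Real.exp_add]; ring_nf
      have e3 : Real.exp (-(3*ρ t)) * Real.exp (2*ρ t) = Real.exp (-(ρ t)) := by
        rw [← Real.exp_add]; ring_nf
      have e4 : (2:ℝ) ≤ Real.exp (2*ρ t) := by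
        have := Real.add_one_le_exp (2*ρ t); linarith
      nlinarith [Real.exp_pos (-(ρ t)), Real.exp_pos (-(3*ρ t)), Real.exp_pos (2*ρ t)]
    have hexp2 : Real.exp (-(2*ρ t)) ≤ Real.exp (-(lam * t)) := by
      apply Real.exp_le_exp.mpr; linarith
    have hfs1 : ‖f t‖ ≤ 1 := by
      refine hfs.trans ?_
      exact hble
    calc (c t - 1) * ‖f t‖ ≤ (4 * Real.exp (-(lam*t))) * 1 := by
          apply mul_le_mul (hexp.trans (by linarith)) hfs1 (norm_nonneg _) (by positivity)
      _ ≤ 6 * Real.exp (-(lam*t)) := by nlinarith [Real.exp_pos (-(lam*t))]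

theorem step3_length_and_exponential_bounds
    {d : ℕ} (hd : 0 < d)
    (θ θ' : ℝ → EuclideanSpace ℝ (Fin d))
    (hθ1 : ∀ t ∈ Icc (0 : ℝ) 1, ‖θ t‖ = 1)
    (hθd : ∀ t ∈ Icc (0 : ℝ) 1, HasDerivAt θ (θ' t) t)
    (hθ'c : ContinuousOn θ' (Icc 0 1))
    (η : ℝ → ℝ → EuclideanSpace ℝ (Fin d)) (ρ : ℝ → ℝ → ℝ)
    (hηc : ∀ lam > (0 : ℝ), ContinuousOn (η lam) (Icc 0 1))
    (hρc : ∀ lam > (0 : ℝ), ContinuousOn (ρ lam) (Icc 0 1))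
    (hη1 : ∀ lam > (0 : ℝ), ∀ t ∈ Icc (0 : ℝ) 1, ‖η lam t‖ = 1)
    (hη0 : ∀ lam > (0 : ℝ), η lam 0 = θ 0)
    (hρ0 : ∀ lam > (0 : ℝ), ρ lam 0 = 0)
    (hρpos : ∀ lam > (0 : ℝ), ∀ t ∈ Ioc (0 : ℝ) 1, 0 < ρ lam t)
    (hODE : ∀ lam > (0 : ℝ), ∀ t ∈ Ioc (0 : ℝ) 1,
      HasDerivAt (η lam)
        ((lam * (Real.cosh (ρ lam t) / Real.sinh (ρ lam t))) •
          (θ t - (inner ℝ (θ t) (η lam t) : ℝ) • η lam t)) t ∧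
      HasDerivAt (ρ lam) (lam * (inner ℝ (θ t) (η lam t) : ℝ)) t) :
    (∃ C > (0 : ℝ), ∃ Λ > (0 : ℝ), ∀ lam ≥ Λ,
      (∀ t ∈ Icc (0 : ℝ) 1, lam * t - C * t / lam ≤ ρ lam t ∧ ρ lam t ≤ lam * t) ∧
      (∀ t ∈ Ioc (0 : ℝ) 1,
        (Real.cosh (ρ lam t) / Real.sinh (ρ lam t) - 1) * ‖η lam t - θ t‖ ≤
          C * Real.exp (-(lam * t))) ∧
      lam - C / lam ≤ ρ lam 1 ∧ ρ lam 1 ≤ lam) ∧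
    Tendsto (fun lam => ρ lam 1 / lam) atTop (nhds 1) := by
  obtain ⟨M₀, hM₀⟩ := isCompact_Icc.exists_bound_of_continuousOn hθ'c
  set M : ℝ := max M₀ 1 with hMdef
  have hM1 : 1 ≤ M := le_max_right _ _
  have hM0 : (0:ℝ) < M := lt_of_lt_of_le one_pos hM1
  have hM : ∀ t ∈ Icc (0:ℝ) 1, ‖θ' t‖ ≤ M := fun t ht => (hM₀ t ht).trans (le_max_left _ _)
  have key : ∀ lam, 2*M ≤ lam →
      (∀ t ∈ Icc (0 : ℝ) 1, lam * t - (2*M^2) * t / lam ≤ ρ lam t ∧ ρ lam t ≤ lam * t) ∧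
      (∀ t ∈ Ioc (0 : ℝ) 1,
        (Real.cosh (ρ lam t) / Real.sinh (ρ lam t) - 1) * ‖η lam t - θ t‖ ≤
          6 * Real.exp (-(lam * t))) := by
    intro lam hlam
    have hlam0 : (0:ℝ) < lam := lt_of_lt_of_le (by linarith) hlam
    exact my_step θ θ' hθ1 hθd (η lam) (ρ lam) (hηc lam hlam0) (hρc lam hlam0)
      (hη1 lam hlam0) (hη0 lam hlam0) (hρ0 lam hlam0) (hρpos lam hlam0) lam M
      (hODE lam hlam0) hM1 hM hlam
  set C : ℝ := 2*M^2 + 6 with hCdef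
  have hC0 : (0:ℝ) < C := by positivity
  refine ⟨⟨C, hC0, 2*M, by positivity, ?_⟩, ?_⟩
  · intro lam hlam
    have hlam0 : (0:ℝ) < lam := lt_of_lt_of_le (by linarith) hlam
    obtain ⟨hi, hii⟩ := key lam hlam
    have hmono : ∀ t : ℝ, 0 ≤ t → (2*M^2) * t / lam ≤ C * t / lam := by
      intro t ht0
      apply div_le_div_of_nonneg_right _ hlam0.le
      nlinarith
    refine ⟨?_, ?_, ?_, ?_⟩
    · intro t ht
      obtain ⟨h1, h2⟩ := hi t ht
      exact ⟨by linarith [hmono t ht.1], h2⟩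
    · intro t ht
      have h3 := hii t ht
      have h4 : 0 ≤ M^2 * Real.exp (-(lam*t)) :=
        mul_nonneg (sq_nonneg M) (Real.exp_pos _).le
      linarith
    · have h1 := (hi 1 (by norm_num : (1:ℝ) ∈ Icc (0:ℝ) 1)).1
      have h2 := hmono 1 zero_le_one
      have e1 : lam * 1 - 2*M^2 * 1 / lam = lam - 2*M^2/lam := by ring
      have e2 : C * 1 / lam = C/lam := by ring
      have e3 : 2*M^2 * 1 / lam = 2*M^2/lam := by ring
      rw [e1] at h1
      rw [e2, e3] at h2
      linarith
    · have h2 := (hi 1 (by norm_num : (1:ℝ) ∈ Icc (0:ℝ) 1)).2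
      linarith
  · have hub : ∀ᶠ lam : ℝ in atTop, ρ lam 1 / lam ≤ 1 := by
      filter_upwards [eventually_ge_atTop (2*M), eventually_gt_atTop (0:ℝ)] with lam h1 h2
      have := ((key lam h1).1 1 (by norm_num : (1:ℝ) ∈ Icc (0:ℝ) 1)).2
      rw [div_le_one h2]
      linarith
    have hlb : ∀ᶠ lam : ℝ in atTop, 1 - (2*M^2)/lam^2 ≤ ρ lam 1 / lam := by
      filter_upwards [eventually_ge_atTop (2*M), eventually_gt_atTop (0:ℝ)] with lam h1 h2
      have h3 := ((key lam h1).1 1 (by norm_num : (1:ℝ) ∈ Icc (0:ℝ) 1)).1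
      rw [le_div_iff₀ h2]
      have e1 : (1 - 2*M^2/lam^2) * lam = lam - (2*M^2) * 1/lam := by
        field_simp
      rw [e1]
      have e2 : (2*M^2) * 1 / lam = 2*M^2/lam := by ring
      linarith
    have hto : Tendsto (fun lam : ℝ => 1 - (2*M^2)/lam^2) atTop (nhds 1) := by
      have h1 : Tendsto (fun lam : ℝ => (2*M^2)/lam^2) atTop (nhds 0) := by
        apply Tendsto.div_atTop tendsto_const_nhds
        exact tendsto_pow_atTop (two_ne_zero) |>.comp tendsto_id |>.congr (fun x => rfl)
      simpa using tendsto_const_nhds.sub h1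
    exact tendsto_of_tendsto_of_tendsto_of_le_of_le' hto tendsto_const_nhds hlb hub
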